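/- The exponent bound for the capped fractional maximal function is sharp: let n ≥ 2, let σ ∈ {1,…,n−1} be an integer, α ∈ (0, n−σ), and p ≥ 1 + α/(n−σ−α). Let E := {x ∈ ℝⁿ : x_{σ+1} = ⋯ = x_n = 0}, let Ω := B(0,1) be the open unit ball, and let μ be the σ-dimensional Hausdorff measure restricted to E ∩ B(0,1). Then ∫_Ω (M_α^σ μ(x))^p dx = ∞, where the supremum in M_α^σ is taken over 0 < r ≤ 2. -/

import Mathlib

noncomputable section
open MeasureTheory Metric Set Filter
open scoped ENNReal Topology NNReal Pointwise

abbrev Euc (n : ℕ) := EuclideanSpace ℝ (Fin n)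

/-- The capped fractional maximal function of a measure `μ`, with radii up to `D`. -/
def cappedFracMaximal {n : ℕ} (D : ℝ) (μ : Measure (Euc n)) (σ α : ℝ) (x : Euc n) :
    ℝ≥0∞ :=
  ⨆ r ∈ Set.Ioc (0 : ℝ) D,
    min (μ (ball x r)) (ENNReal.ofReal (r ^ σ)) / (volume (ball x r)) ^ (1 - α / n)

namespace CappedAux

/-- Extension by zero of a vector in `ℝ^σ` to `Euc n`. -/
def embMap (n σ : ℕ) (y : Fin σ → ℝ) : Euc n :=
  (WithLp.equiv 2 (Fin n → ℝ)).symm (fun i => if h : (i : ℕ) < σ then y ⟨i, h⟩ else 0)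

/-- Projection onto the first `σ` coordinates inside `Euc n`. -/
def projMap (n σ : ℕ) (x : Euc n) : Euc n :=
  (WithLp.equiv 2 (Fin n → ℝ)).symm (fun i => if (i : ℕ) < σ then x i else 0)

lemma embMap_apply (n σ : ℕ) (y : Fin σ → ℝ) (i : Fin n) :
    embMap n σ y i = if h : (i : ℕ) < σ then y ⟨i, h⟩ else 0 := rfl

lemma projMap_apply (n σ : ℕ) (x : Euc n) (i : Fin n) :
    projMap n σ x i = if (i : ℕ) < σ then x i else 0 := rfl

lemma sum_split {n σ : ℕ} (hσn : σ ≤ n) (f : ℕ → ℝ) (hf : ∀ i, σ ≤ i → f i = 0) :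
    ∑ i : Fin n, f i = ∑ j : Fin σ, f j := by
  rw [Fin.sum_univ_eq_sum_range, Fin.sum_univ_eq_sum_range]
  exact (Finset.sum_subset (Finset.range_subset_range.2 hσn)
    (fun i _ hi => hf i (not_lt.1 (by simpa using hi)))).symm

lemma coord_dist_le {n : ℕ} (x y : Euc n) (i : Fin n) : dist (x i) (y i) ≤ dist x y := by
  rw [EuclideanSpace.dist_eq]
  rw [show dist (x i) (y i) = Real.sqrt (dist (x i) (y i) ^ 2) from (Real.sqrt_sq dist_nonneg).symm]
  exact Real.sqrt_le_sqrt <| Finset.single_le_sum (f := fun j => dist (x j) (y j) ^ 2)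
    (fun j _ => sq_nonneg _) (Finset.mem_univ i)

lemma coord_abs_le_norm {n : ℕ} (x : Euc n) (i : Fin n) : |x i| ≤ ‖x‖ := by
  have := coord_dist_le x 0 i
  simpa [Real.dist_eq, dist_eq_norm] using this

lemma norm_le_of_coords {n : ℕ} (x : Euc n) {C : ℝ} (hC : 0 ≤ C)
    (h : ∀ i, |x i| ≤ C) : ‖x‖ ≤ Real.sqrt n * C := by
  rw [EuclideanSpace.norm_eq]
  have h1 : ∑ i : Fin n, ‖x i‖ ^ 2 ≤ ∑ _i : Fin n, C ^ 2 := by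
    refine Finset.sum_le_sum fun i _ => ?_
    have := h i
    rw [Real.norm_eq_abs]
    nlinarith [abs_nonneg (x i)]
  calc Real.sqrt (∑ i : Fin n, ‖x i‖ ^ 2) ≤ Real.sqrt (∑ _i : Fin n, C ^ 2) :=
        Real.sqrt_le_sqrt h1
    _ = Real.sqrt (n * C ^ 2) := by
        rw [Finset.sum_const, Finset.card_univ, Fintype.card_fin, nsmul_eq_mul]
    _ = Real.sqrt n * C := by
        rw [Real.sqrt_mul (by positivity), Real.sqrt_sq hC]


/-- The coordinate `σ`-plane in `Euc n`. -/
def Eset (n σ : ℕ) : Set (Euc n) := {x : Euc n | ∀ i : Fin n, σ ≤ (i : ℕ) → x i = 0}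

lemma add_mem_Eset {n σ : ℕ} {x y : Euc n} (hx : x ∈ Eset n σ) (hy : y ∈ Eset n σ) :
    x + y ∈ Eset n σ := fun i hi => by
  simp [PiLp.add_apply, hx i hi, hy i hi]

lemma sub_mem_Eset {n σ : ℕ} {x y : Euc n} (hx : x ∈ Eset n σ) (hy : y ∈ Eset n σ) :
    x - y ∈ Eset n σ := fun i hi => by
  simp [PiLp.sub_apply, hx i hi, hy i hi]

lemma smul_mem_Eset {n σ : ℕ} {x : Euc n} (r : ℝ) (hx : x ∈ Eset n σ) :
    r • x ∈ Eset n σ := fun i hi => by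
  simp [PiLp.smul_apply, hx i hi]

lemma translate_Eset_inter_ball {n σ : ℕ} {y : Euc n} (hy : y ∈ Eset n σ) (r : ℝ) :
    (fun z => z + y) '' (Eset n σ ∩ ball 0 r) = Eset n σ ∩ ball y r := by
  ext z
  constructor
  · rintro ⟨w, ⟨hwE, hwb⟩, rfl⟩
    refine ⟨add_mem_Eset hwE hy, ?_⟩
    simp only [mem_ball] at hwb ⊢
    simpa [dist_eq_norm] using hwb
  · rintro ⟨hzE, hzb⟩
    refine ⟨z - y, ⟨sub_mem_Eset hzE hy, ?_⟩, sub_add_cancel z y⟩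
    simp only [mem_ball] at hzb ⊢
    simpa [dist_eq_norm] using hzb

lemma smul_Eset_inter_ball {n σ : ℕ} {r : ℝ} (hr : 0 < r) :
    r • (Eset n σ ∩ ball (0 : Euc n) 1) = Eset n σ ∩ ball 0 r := by
  ext z
  constructor
  · rintro ⟨w, ⟨hwE, hwb⟩, rfl⟩
    refine ⟨smul_mem_Eset r hwE, ?_⟩
    simp only [mem_ball, dist_zero_right] at hwb ⊢
    rw [norm_smul, Real.norm_eq_abs, abs_of_pos hr]
    calc r * ‖w‖ < r * 1 := by exact mul_lt_mul_of_pos_left hwb hr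
      _ = r := mul_one r
  · rintro ⟨hzE, hzb⟩
    refine ⟨r⁻¹ • z, ⟨smul_mem_Eset _ hzE, ?_⟩, by
      show r • r⁻¹ • z = z
      rw [smul_smul, mul_inv_cancel₀ hr.ne', one_smul]⟩
    simp only [mem_ball, dist_zero_right] at hzb ⊢
    rw [norm_smul, Real.norm_eq_abs, abs_of_pos (inv_pos.2 hr)]
    rw [inv_mul_lt_iff₀ hr, mul_one]
    exact hzb

lemma hausdorff_Eset_ball {n σ : ℕ} {y : Euc n} (hy : y ∈ Eset n σ) {r : ℝ} (hr : 0 < r) :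
    μH[(σ : ℝ)] (Eset n σ ∩ ball y r) =
      ENNReal.ofReal r ^ (σ : ℝ) * μH[(σ : ℝ)] (Eset n σ ∩ ball (0 : Euc n) 1) := by
  have hT : Isometry (fun z : Euc n => z + y) :=
    Isometry.of_dist_eq fun a b => by rw [dist_add_right]
  rw [← translate_Eset_inter_ball hy r,
    hT.hausdorffMeasure_image (Or.inl (by positivity)), ← smul_Eset_inter_ball hr,
    MeasureTheory.Measure.hausdorffMeasure_smul₀ (by positivity) hr.ne']
  rw [ENNReal.smul_def, smul_eq_mul, ENNReal.coe_rpow_of_nonneg _ (by positivity),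
    ← enorm_eq_nnnorm, Real.enorm_eq_ofReal hr.le]


lemma projMap_mem_Eset {n σ : ℕ} (x : Euc n) : projMap n σ x ∈ Eset n σ := fun i hi => by
  show (if (i : ℕ) < σ then x i else 0) = 0
  rw [if_neg (not_lt.2 hi)]

lemma norm_projMap_le {n σ : ℕ} (x : Euc n) : ‖projMap n σ x‖ ≤ ‖x‖ := by
  rw [EuclideanSpace.norm_eq, EuclideanSpace.norm_eq]
  apply Real.sqrt_le_sqrt
  refine Finset.sum_le_sum fun i _ => ?_
  show ‖(if (i : ℕ) < σ then x i else 0)‖ ^ 2 ≤ ‖x i‖ ^ 2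
  split
  · exact le_refl _
  · simpa using sq_nonneg ‖x i‖

lemma sub_projMap_apply {n σ : ℕ} (x : Euc n) (i : Fin n) :
    (x - projMap n σ x) i = if (i : ℕ) < σ then 0 else x i := by
  rw [PiLp.sub_apply]
  show x i - (if (i : ℕ) < σ then x i else 0) = _
  split <;> ring

lemma c0_ne_zero {n σ : ℕ} (hn : 0 < n) (hσn : σ ≤ n) :
    μH[(σ : ℝ)] (Eset n σ ∩ ball (0 : Euc n) 1) ≠ 0 := by
  set P : Euc n → (Fin σ → ℝ) := fun x j => x (Fin.castLE hσn j) with hPdef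
  have hP : LipschitzWith 1 P := LipschitzWith.of_dist_le_mul fun x y => by
    simp only [NNReal.coe_one, one_mul]
    exact (dist_pi_le_iff dist_nonneg).2 fun j => coord_dist_le x y _
  have hsn : (0:ℝ) < Real.sqrt n := Real.sqrt_pos.2 (by exact_mod_cast hn)
  set b' : ℝ := (2 * Real.sqrt n)⁻¹ with hb'def
  have hb' : 0 < b' := by positivity
  have hball : ball (0 : Fin σ → ℝ) b' ⊆ P '' (Eset n σ ∩ ball 0 1) := by
    intro y hy
    refine ⟨embMap n σ y, ⟨?_, ?_⟩, ?_⟩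
    · intro i hi
      show (if h : (i : ℕ) < σ then y ⟨i, h⟩ else 0) = 0
      rw [dif_neg (not_lt.2 hi)]
    · rw [mem_ball, dist_zero_right]
      have hyb : ∀ j, |y j| ≤ b' := fun j => by
        calc |y j| = ‖y j‖ := rfl
          _ ≤ ‖y‖ := norm_le_pi_norm y j
          _ ≤ b' := by simpa [dist_zero_right] using (mem_ball.1 hy).le
      have : ‖embMap n σ y‖ ≤ Real.sqrt n * b' := by
        refine norm_le_of_coords _ hb'.le fun i => ?_
        show |if h : (i : ℕ) < σ then y ⟨i, h⟩ else 0| ≤ b'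
        split
        · exact hyb _
        · simpa using hb'.le
      have hhalf : Real.sqrt n * b' = 1/2 := by
        rw [hb'def]; field_simp
      linarith [this, hhalf]
    · funext j
      show (if h : ((Fin.castLE hσn j : Fin n) : ℕ) < σ then y ⟨_, h⟩ else 0) = y j
      rw [dif_pos (by simpa using j.isLt)]
      exact congrArg y (Fin.ext (by simp))
  have hcard : ((Fintype.card (Fin σ) : ℝ)) = (σ : ℝ) := by simp
  have hμHpi : (μH[(σ : ℝ)] : Measure (Fin σ → ℝ)) = volume := by
    rw [← hcard]; exact hausdorffMeasure_pi_real
  intro h0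
  have h1 : (0:ℝ≥0∞) < volume (ball (0 : Fin σ → ℝ) b') := by
    rw [Real.volume_pi_ball _ hb']
    exact ENNReal.ofReal_pos.2 (by positivity)
  have h2 : volume (ball (0 : Fin σ → ℝ) b') ≤
      μH[(σ : ℝ)] (P '' (Eset n σ ∩ ball 0 1)) := by
    rw [hμHpi] at *
    exact measure_mono hball
  have h3 : μH[(σ : ℝ)] (P '' (Eset n σ ∩ ball 0 1)) ≤
      (1 : ℝ≥0) ^ (σ:ℝ) * μH[(σ : ℝ)] (Eset n σ ∩ ball (0:Euc n) 1) :=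
    hP.hausdorffMeasure_image_le (by positivity) _
  rw [h0, mul_zero] at h3
  exact absurd (le_antisymm (h2.trans h3) zero_le) h1.ne'

lemma maximal_lower {n σ : ℕ} (hn : 0 < n) {α : ℝ} (hα0 : 0 < α)
    (hαn : α < (n : ℝ) - σ) (x : Euc n)
    (hx : ‖x‖ ≤ 1 / 2) (hd0 : 0 < ‖x - projMap n σ x‖)
    (hd2 : ‖x - projMap n σ x‖ ≤ 1 / 2) :
    (min (μH[(σ : ℝ)] (Eset n σ ∩ ball (0 : Euc n) 1)) 1 /
        (ENNReal.ofReal (2 ^ ((n : ℝ) - α)) *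
          (volume (ball (0 : Euc n) 1)) ^ (1 - α / (n : ℝ)))) *
      ENNReal.ofReal (‖x - projMap n σ x‖ ^ (-((n : ℝ) - σ - α))) ≤
    cappedFracMaximal 2 ((μH[(σ : ℝ)]).restrict (Eset n σ ∩ ball 0 1)) σ α x := by
  have hnR : (0:ℝ) < n := by exact_mod_cast hn
  set d : ℝ := ‖x - projMap n σ x‖ with hddef
  set y : Euc n := projMap n σ x with hydef
  set r : ℝ := 2 * d with hrdef
  set c₀ : ℝ≥0∞ := μH[(σ : ℝ)] (Eset n σ ∩ ball (0 : Euc n) 1) with hc₀def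
  set V : ℝ≥0∞ := volume (ball (0 : Euc n) 1) with hVdef
  set θ : ℝ := 1 - α / (n : ℝ) with hθdef
  set minc : ℝ≥0∞ := min c₀ 1 with hmincdef
  set Dc : ℝ≥0∞ := ENNReal.ofReal (2 ^ ((n : ℝ) - α)) * V ^ θ with hDcdef
  set β : ℝ := (n : ℝ) - σ - α with hβdef
  have hβ0 : 0 < β := by rw [hβdef]; linarith
  have hθ0 : 0 ≤ θ := by
    rw [hθdef]
    have hσ0 : (0:ℝ) ≤ (σ:ℝ) := Nat.cast_nonneg σ
    have : α / n ≤ 1 := by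
      rw [div_le_one hnR]; linarith
    linarith
  have hr0 : 0 < r := by rw [hrdef]; linarith
  have hmem : r ∈ Set.Ioc (0:ℝ) 2 := ⟨hr0, by rw [hrdef]; linarith⟩
  have hV0 : V ≠ 0 := (measure_ball_pos volume 0 one_pos).ne'
  have hVT : V ≠ ∞ := measure_ball_lt_top.ne
  have hDc0 : Dc ≠ 0 := by
    rw [hDcdef]
    exact mul_ne_zero ((ENNReal.ofReal_pos.2 (by positivity)).ne')
      (ENNReal.rpow_pos (pos_iff_ne_zero.2 hV0) hVT).ne'
  have hDcT : Dc ≠ ∞ := by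
    rw [hDcdef]
    exact ENNReal.mul_ne_top ENNReal.ofReal_ne_top (ENNReal.rpow_ne_top_of_nonneg hθ0 hVT)
  set μ' : Measure (Euc n) := (μH[(σ : ℝ)]).restrict (Eset n σ ∩ ball 0 1) with hμ'def
  -- the subset inclusion
  have hsub : Eset n σ ∩ ball y d ⊆ ball x r ∩ (Eset n σ ∩ ball 0 1) := by
    rintro z ⟨hzE, hzb⟩
    rw [mem_ball] at hzb
    have hdxy : dist y x = d := by rw [dist_comm, dist_eq_norm, hddef, hydef]
    have hynorm : ‖y‖ ≤ 1 / 2 := le_trans (norm_projMap_le x) hx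
    refine ⟨mem_ball.2 ?_, hzE, mem_ball.2 ?_⟩
    · calc dist z x ≤ dist z y + dist y x := dist_triangle z y x
        _ < d + d := by rw [hdxy]; linarith
        _ = r := by rw [hrdef]; ring
    · calc dist z 0 ≤ dist z y + dist y 0 := dist_triangle z y 0
        _ < d + ‖y‖ := by rw [dist_zero_right]; linarith
        _ ≤ 1 := by linarith
  -- measure lower bound
  have hμball : ENNReal.ofReal (d ^ (σ:ℝ)) * c₀ ≤ μ' (ball x r) := by
    rw [hμ'def, Measure.restrict_apply measurableSet_ball]
    calc ENNReal.ofReal (d ^ (σ:ℝ)) * c₀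
        = ENNReal.ofReal d ^ (σ:ℝ) * c₀ := by
          rw [ENNReal.ofReal_rpow_of_pos hd0]
      _ = μH[(σ:ℝ)] (Eset n σ ∩ ball y d) :=
          (hausdorff_Eset_ball (projMap_mem_Eset x) hd0).symm
      _ ≤ μH[(σ:ℝ)] (ball x r ∩ (Eset n σ ∩ ball 0 1)) := measure_mono hsub
  -- min lower bound
  have hmin : ENNReal.ofReal (d ^ (σ:ℝ)) * minc ≤
      min (μ' (ball x r)) (ENNReal.ofReal (r ^ (σ:ℝ))) := by
    refine le_min ?_ ?_
    · exact le_trans (mul_le_mul_right (min_le_left _ _) _) hμball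
    · calc ENNReal.ofReal (d ^ (σ:ℝ)) * minc ≤ ENNReal.ofReal (d ^ (σ:ℝ)) * 1 :=
          mul_le_mul_right (min_le_right _ _) _
        _ = ENNReal.ofReal (d ^ (σ:ℝ)) := mul_one _
        _ ≤ ENNReal.ofReal (r ^ (σ:ℝ)) := ENNReal.ofReal_le_ofReal
            (Real.rpow_le_rpow hd0.le (by rw [hrdef]; linarith) (Nat.cast_nonneg σ))
  -- volume computation
  haveI : Nonempty (Fin n) := ⟨⟨0, hn⟩⟩
  haveI : Nontrivial (Euc n) := (WithLp.equiv 2 (Fin n → ℝ)).nontrivial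
  have hvolθ : (volume (ball x r)) ^ θ = ENNReal.ofReal (r ^ ((n:ℝ) - α)) * V ^ θ := by
    rw [Measure.addHaar_ball volume x hr0.le, finrank_euclideanSpace_fin,
      ENNReal.mul_rpow_of_nonneg _ _ hθ0, ← hVdef]
    congr 1
    rw [ENNReal.ofReal_rpow_of_pos (by positivity)]
    congr 1
    rw [← Real.rpow_natCast r n, ← Real.rpow_mul hr0.le]
    congr 1
    rw [hθdef]
    field_simp
  -- put together
  have hKey : minc / Dc * ENNReal.ofReal (d ^ (-β)) ≤
      ENNReal.ofReal (d ^ (σ:ℝ)) * minc / (ENNReal.ofReal (r ^ ((n:ℝ) - α)) * V ^ θ) := by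
    rw [ENNReal.le_div_iff_mul_le
      (Or.inl (mul_ne_zero ((ENNReal.ofReal_pos.2 (by positivity)).ne')
        (ENNReal.rpow_pos (pos_iff_ne_zero.2 hV0) hVT).ne'))
      (Or.inl (ENNReal.mul_ne_top ENNReal.ofReal_ne_top
        (ENNReal.rpow_ne_top_of_nonneg hθ0 hVT)))]
    have hr' : ENNReal.ofReal (d ^ (-β)) * ENNReal.ofReal (r ^ ((n:ℝ) - α)) =
        ENNReal.ofReal (2 ^ ((n:ℝ) - α)) * ENNReal.ofReal (d ^ (σ:ℝ)) := by
      rw [← ENNReal.ofReal_mul (by positivity), ← ENNReal.ofReal_mul (by positivity)]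
      congr 1
      rw [hrdef, Real.mul_rpow (by norm_num) hd0.le, ← mul_assoc,
        mul_comm (d ^ (-β)) (2 ^ ((n:ℝ) - α)), mul_assoc, ← Real.rpow_add hd0]
      congr 1
      rw [hβdef]; ring
    refine le_of_eq ?_
    calc minc / Dc * ENNReal.ofReal (d ^ (-β)) *
          (ENNReal.ofReal (r ^ ((n:ℝ) - α)) * V ^ θ)
        = minc / Dc * (ENNReal.ofReal (d ^ (-β)) * ENNReal.ofReal (r ^ ((n:ℝ) - α))) * V ^ θ := by
          ring
      _ = minc / Dc * (ENNReal.ofReal (2 ^ ((n:ℝ) - α)) * ENNReal.ofReal (d ^ (σ:ℝ))) * V ^ θ := by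
          rw [hr']
      _ = minc / Dc * Dc * ENNReal.ofReal (d ^ (σ:ℝ)) := by
          rw [hDcdef]; ring
      _ = minc * ENNReal.ofReal (d ^ (σ:ℝ)) := by
          rw [ENNReal.div_mul_cancel hDc0 hDcT]
      _ = ENNReal.ofReal (d ^ (σ:ℝ)) * minc := mul_comm _ _
  -- conclude via the supremum
  have hsup : min (μ' (ball x r)) (ENNReal.ofReal (r ^ (σ:ℝ))) /
      (volume (ball x r)) ^ (1 - α / (n:ℝ)) ≤
      cappedFracMaximal 2 μ' σ α x := by
    unfold cappedFracMaximal
    exact le_biSup (fun r => min (μ' (ball x r)) (ENNReal.ofReal (r ^ (σ:ℝ))) /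
      (volume (ball x r)) ^ (1 - α / (n:ℝ))) hmem
  refine le_trans ?_ hsup
  rw [← hθdef, hvolθ]
  exact le_trans hKey (ENNReal.div_le_div_right hmin _)

lemma prod_split {n σ : ℕ} (hσn : σ ≤ n) (g : ℕ → ℝ≥0∞) :
    ∏ i : Fin n, g i = (∏ j ∈ Finset.range σ, g j) * ∏ j ∈ Finset.Ico σ n, g j := by
  rw [Fin.prod_univ_eq_prod_range, Finset.range_eq_Ico,
    ← Finset.prod_Ico_consecutive g (Nat.zero_le σ) hσn, Finset.range_eq_Ico]


end CappedAux

open CappedAux in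
set_option maxHeartbeats 2000000 in
/-- sharpness of the exponent bound for the capped fractional maximal
function: for the `σ`-dimensional Hausdorff measure on a `σ`-plane, the `L^p`-integral over
the unit ball diverges when `p ≥ 1 + α/(n-σ-α)`. -/
theorem cappedFracMaximal_sharp
    (n : ℕ) (hn : 2 ≤ n) (σ : ℕ) (hσ1 : 1 ≤ σ) (hσn : σ ≤ n - 1)
    (α : ℝ) (hα : α ∈ Set.Ioo (0 : ℝ) ((n : ℝ) - σ))
    (p : ℝ) (hp : 1 + α / ((n : ℝ) - σ - α) ≤ p)
    (E : Set (Euc n)) (hE : E = {x : Euc n | ∀ i : Fin n, σ ≤ (i : ℕ) → x i = 0})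
    (μ : Measure (Euc n)) (hμ : μ = (μH[(σ : ℝ)]).restrict (E ∩ ball 0 1)) :
    ∫⁻ x in ball (0 : Euc n) 1, (cappedFracMaximal 2 μ σ α x) ^ p = ∞ := by
  have hEE : E = Eset n σ := hE
  subst hμ
  rw [hEE]
  clear hE hEE E
  have hσn' : σ < n := by omega
  have hn0 : 0 < n := by omega
  have hnR : (0:ℝ) < n := by exact_mod_cast hn0
  set m : ℕ := n - σ with hmdef
  have hm1 : 1 ≤ m := by omega
  have hmR : (m : ℝ) = (n : ℝ) - σ := by
    rw [hmdef, Nat.cast_sub hσn'.le]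
  set β : ℝ := (n : ℝ) - σ - α with hβdef
  have hβ0 : 0 < β := by rw [hβdef]; linarith [hα.2]
  have hp1 : (1:ℝ) ≤ p := by
    have := div_pos hα.1 hβ0
    rw [hβdef] at this
    linarith
  have hp0 : (0:ℝ) ≤ p := by linarith
  have hβp : (m : ℝ) ≤ β * p := by
    have h2 : β * (1 + α / β) ≤ β * p := mul_le_mul_of_nonneg_left hp hβ0.le
    have h3 : β * (1 + α / β) = β + α := by field_simp
    rw [h3] at h2
    have hm' : (m : ℝ) = β + α := by rw [hβdef, hmR]; ring
    rw [hm']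
    exact h2
  -- constants
  have hsn : (0:ℝ) < Real.sqrt n := Real.sqrt_pos.2 hnR
  set b : ℝ := (4 * Real.sqrt n)⁻¹ with hbdef
  set c : ℝ := (8 * Real.sqrt n)⁻¹ with hcdef
  have hb : 0 < b := by positivity
  have hc : 0 < c := by positivity
  have hcb : 2 * c ≤ b := by
    rw [hbdef, hcdef]
    rw [show (8:ℝ) * Real.sqrt n = 2 * (4 * Real.sqrt n) by ring, mul_inv]
    rw [show (2:ℝ) * (2⁻¹ * (4 * Real.sqrt n)⁻¹) = (4 * Real.sqrt n)⁻¹ by ring]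
  set u : ℕ → ℝ := fun k => (2⁻¹ : ℝ) ^ (k + 1) with hudef
  have hu : ∀ k, 0 < u k := fun k => by positivity
  have hu2 : ∀ k, u k ≤ 1 / 2 := fun k => by
    rw [hudef]
    calc (2⁻¹:ℝ) ^ (k+1) ≤ (2⁻¹:ℝ) ^ 1 :=
      pow_le_pow_of_le_one (by norm_num) (by norm_num) (by omega)
    _ = 1/2 := by norm_num
  have humono : ∀ k l : ℕ, k < l → u l ≤ 2⁻¹ * u k := fun k l hkl => by
    rw [hudef]
    calc (2⁻¹:ℝ) ^ (l+1) ≤ (2⁻¹:ℝ) ^ (k+2) :=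
      pow_le_pow_of_le_one (by norm_num) (by norm_num) (by omega)
    _ = 2⁻¹ * (2⁻¹:ℝ)^(k+1) := by ring
  -- boxes
  set I : ℕ → ℕ → Set ℝ :=
    fun k i => if i < σ then Ioo (-b) b else Ioo (c * u k) (2 * (c * u k)) with hIdef
  set Box : ℕ → Set (Euc n) :=
    fun k => (MeasurableEquiv.toLp 2 (Fin n → ℝ)).symm ⁻¹'
      (Set.pi univ fun i : Fin n => I k i) with hBoxdef
  have hmemBox : ∀ (k : ℕ) (x : Euc n), x ∈ Box k ↔ ∀ i : Fin n, x i ∈ I k i := by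
    intro k x
    rw [hBoxdef]
    simp only [mem_preimage, Set.mem_pi, mem_univ, forall_true_left]
    rfl
  have hImeas : ∀ k i, MeasurableSet (I k i) := by
    intro k i
    simp only [hIdef]
    split <;> exact measurableSet_Ioo
  have hBoxMeas : ∀ k, MeasurableSet (Box k) := fun k =>
    (MeasurableEquiv.toLp 2 (Fin n → ℝ)).symm.measurable
      (MeasurableSet.univ_pi fun i : Fin n => hImeas k i)
  -- volume of boxes
  have hIvol : ∀ k (i : ℕ), volume (I k i) =
      (if i < σ then ENNReal.ofReal (2 * b) else ENNReal.ofReal (c * u k)) := by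
    intro k i
    simp only [hIdef]
    split
    · rw [Real.volume_Ioo]; congr 1; ring
    · rw [Real.volume_Ioo]; congr 1; ring
  have hBoxVol : ∀ k, volume (Box k) =
      ENNReal.ofReal ((2 * b) ^ σ) * ENNReal.ofReal ((c * u k) ^ m) := by
    intro k
    rw [hBoxdef]
    rw [(EuclideanSpace.volume_preserving_symm_measurableEquiv_toLp (Fin n)).measure_preimage
      (MeasurableSet.univ_pi fun i : Fin n => hImeas k i).nullMeasurableSet]
    rw [volume_pi_pi]
    set g : ℕ → ℝ≥0∞ :=
      fun j => if j < σ then ENNReal.ofReal (2 * b) else ENNReal.ofReal (c * u k) with hgdef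
    have h1 : ∏ j ∈ Finset.range σ, g j = ENNReal.ofReal (2 * b) ^ σ := by
      rw [Finset.prod_congr rfl fun j hj =>
          (by simp only [hgdef]; rw [if_pos (Finset.mem_range.1 hj)] :
            g j = ENNReal.ofReal (2 * b)),
        Finset.prod_const, Finset.card_range]
    have h2 : ∏ j ∈ Finset.Ico σ n, g j = ENNReal.ofReal (c * u k) ^ m := by
      rw [Finset.prod_congr rfl fun j hj =>
          (by simp only [hgdef]; rw [if_neg (not_lt.2 (Finset.mem_Ico.1 hj).1)] :
            g j = ENNReal.ofReal (c * u k)),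
        Finset.prod_const, Nat.card_Ico]
    calc ∏ i : Fin n, volume (I k (i : ℕ))
        = ∏ i : Fin n, g (i : ℕ) := Finset.prod_congr rfl (fun i _ => by
            rw [hIvol k (i : ℕ)])
      _ = (∏ j ∈ Finset.range σ, g j) * ∏ j ∈ Finset.Ico σ n, g j := prod_split hσn'.le g
      _ = ENNReal.ofReal (2 * b) ^ σ * ENNReal.ofReal (c * u k) ^ m := by rw [h1, h2]
      _ = ENNReal.ofReal ((2 * b) ^ σ) * ENNReal.ofReal ((c * u k) ^ m) := by
          rw [← ENNReal.ofReal_pow (by positivity), ← ENNReal.ofReal_pow (by positivity)]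
  -- properties of points in boxes
  have hBoxProp : ∀ k (x : Euc n), x ∈ Box k →
      ‖x‖ ≤ 1/2 ∧ 0 < ‖x - projMap n σ x‖ ∧ ‖x - projMap n σ x‖ ≤ u k := by
    intro k x hx
    rw [hmemBox] at hx
    have hcu2 : 2 * (c * u k) ≤ b := by
      have := hu2 k
      nlinarith [hc, hu k]
    have habs : ∀ i : Fin n, |x i| ≤ b := by
      intro i
      have hxi := hx i
      simp only [hIdef] at hxi
      by_cases hiσ : (i:ℕ) < σ
      · rw [if_pos hiσ] at hxi
        exact abs_le.2 ⟨hxi.1.le, hxi.2.le⟩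
      · rw [if_neg hiσ] at hxi
        have h0 : 0 < x i := lt_trans (by positivity) hxi.1
        rw [abs_of_pos h0]
        linarith [hxi.2]
    constructor
    · calc ‖x‖ ≤ Real.sqrt n * b := norm_le_of_coords x hb.le habs
        _ = 4⁻¹ := by rw [hbdef]; field_simp
        _ ≤ 1/2 := by norm_num
    have hτabs : ∀ i : Fin n, |(x - projMap n σ x) i| ≤ 2 * (c * u k) := by
      intro i
      rw [sub_projMap_apply]
      by_cases hiσ : (i:ℕ) < σ
      · rw [if_pos hiσ]
        simp
        positivity
      · rw [if_neg hiσ]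
        have hxi := hx i
        simp only [hIdef] at hxi
        rw [if_neg hiσ] at hxi
        have h0 : 0 < x i := lt_trans (by positivity) hxi.1
        rw [abs_of_pos h0]
        exact hxi.2.le
    constructor
    · -- 0 < d
      have hnlt : ¬((((⟨σ, hσn'⟩ : Fin n)) : ℕ) < σ) := by
        show ¬(σ < σ)
        exact lt_irrefl σ
      have h1 : (x - projMap n σ x) ⟨σ, hσn'⟩ = x ⟨σ, hσn'⟩ := by
        rw [sub_projMap_apply, if_neg hnlt]
      have hxi := hx ⟨σ, hσn'⟩
      simp only [hIdef] at hxi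
      rw [if_neg hnlt] at hxi
      have h0 : 0 < x ⟨σ, hσn'⟩ := lt_trans (by positivity) hxi.1
      calc (0:ℝ) < x ⟨σ, hσn'⟩ := h0
        _ = (x - projMap n σ x) ⟨σ, hσn'⟩ := h1.symm
        _ ≤ |(x - projMap n σ x) ⟨σ, hσn'⟩| := le_abs_self _
        _ ≤ ‖x - projMap n σ x‖ := coord_abs_le_norm _ _
    · -- d ≤ u k
      calc ‖x - projMap n σ x‖ ≤ Real.sqrt n * (2 * (c * u k)) :=
          norm_le_of_coords _ (by positivity) hτabs
        _ = 4⁻¹ * u k := by rw [hcdef]; field_simp; ring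
        _ ≤ u k := by nlinarith [hu k]
  -- constants for the maximal bound
  set c₀ : ℝ≥0∞ := μH[(σ : ℝ)] (Eset n σ ∩ ball (0 : Euc n) 1) with hc₀def
  set V : ℝ≥0∞ := volume (ball (0 : Euc n) 1) with hVdef
  set Kp : ℝ≥0∞ :=
    min c₀ 1 / (ENNReal.ofReal (2 ^ ((n : ℝ) - α)) * V ^ (1 - α / (n : ℝ))) with hKpdef
  have hV0 : V ≠ 0 := (measure_ball_pos volume 0 one_pos).ne'
  have hVT : V ≠ ∞ := measure_ball_lt_top.ne
  have hθ0 : 0 ≤ 1 - α / (n : ℝ) := by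
    have hσ0 : (0:ℝ) ≤ (σ:ℝ) := Nat.cast_nonneg σ
    have : α / n ≤ 1 := by rw [div_le_one hnR]; linarith [hα.2]
    linarith
  have hKp0 : Kp ≠ 0 := by
    rw [hKpdef]
    refine (ENNReal.div_pos ?_ ?_).ne'
    · exact (lt_min (pos_iff_ne_zero.2 (c0_ne_zero hn0 hσn'.le)) one_pos).ne'
    · exact ENNReal.mul_ne_top ENNReal.ofReal_ne_top (ENNReal.rpow_ne_top_of_nonneg hθ0 hVT)
  have hKpT : Kp ≠ ∞ := by
    rw [hKpdef]
    refine (ENNReal.div_lt_top ?_ ?_).ne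
    · exact ne_top_of_le_ne_top ENNReal.one_ne_top (min_le_right _ _)
    · exact mul_ne_zero (ENNReal.ofReal_pos.2 (by positivity)).ne'
        (ENNReal.rpow_pos (pos_iff_ne_zero.2 hV0) hVT).ne'
  -- pointwise lower bound on boxes
  have hPoint : ∀ (k : ℕ) (x : Euc n), x ∈ Box k →
      Kp ^ p * ENNReal.ofReal ((u k) ^ (-(m : ℝ))) ≤
        (cappedFracMaximal 2 ((μH[(σ : ℝ)]).restrict (Eset n σ ∩ ball 0 1)) σ α x) ^ p := by
    intro k x hx
    obtain ⟨hxn, hd0, hdu⟩ := hBoxProp k x hx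
    have hd2 : ‖x - projMap n σ x‖ ≤ 1/2 := le_trans hdu (hu2 k)
    have hbase := maximal_lower (σ := σ) hn0 hα.1 hα.2 x hxn hd0 hd2
    have hstep1 : ENNReal.ofReal (u k ^ (-(m:ℝ))) ≤
        ENNReal.ofReal (‖x - projMap n σ x‖ ^ ((-β) * p)) := by
      apply ENNReal.ofReal_le_ofReal
      calc u k ^ (-(m:ℝ)) ≤ ‖x - projMap n σ x‖ ^ (-(m:ℝ)) :=
          Real.rpow_le_rpow_of_nonpos hd0 hdu (neg_nonpos.2 (Nat.cast_nonneg m))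
        _ ≤ ‖x - projMap n σ x‖ ^ ((-β) * p) :=
          Real.rpow_le_rpow_of_exponent_ge hd0 (by linarith) (by nlinarith [hβp])
    have hstep2 : ENNReal.ofReal (‖x - projMap n σ x‖ ^ ((-β) * p)) =
        (ENNReal.ofReal (‖x - projMap n σ x‖ ^ (-β))) ^ p := by
      rw [Real.rpow_mul hd0.le, ENNReal.ofReal_rpow_of_pos (Real.rpow_pos_of_pos hd0 _)]
    calc Kp ^ p * ENNReal.ofReal (u k ^ (-(m:ℝ)))
        ≤ Kp ^ p * (ENNReal.ofReal (‖x - projMap n σ x‖ ^ (-β))) ^ p := by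
          rw [← hstep2]; exact mul_le_mul_right hstep1 _
      _ = (Kp * ENNReal.ofReal (‖x - projMap n σ x‖ ^ (-β))) ^ p :=
          (ENNReal.mul_rpow_of_nonneg _ _ hp0).symm
      _ ≤ (cappedFracMaximal 2 ((μH[(σ : ℝ)]).restrict (Eset n σ ∩ ball 0 1)) σ α x) ^ p :=
          ENNReal.rpow_le_rpow hbase hp0
  -- the constant per-box contribution
  set ε : ℝ≥0∞ := Kp ^ p * ENNReal.ofReal ((2*b)^σ * c^m) with hεdef
  have hε0 : ε ≠ 0 := by
    rw [hεdef]
    exact mul_ne_zero (ENNReal.rpow_pos (pos_iff_ne_zero.2 hKp0) hKpT).ne'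
      (ENNReal.ofReal_pos.2 (by positivity)).ne'
  have hterm : ∀ k : ℕ, ε ≤
      ∫⁻ x in Box k,
        (cappedFracMaximal 2 ((μH[(σ : ℝ)]).restrict (Eset n σ ∩ ball 0 1)) σ α x) ^ p := by
    intro k
    have hpow : u k ^ (-(m:ℝ)) * u k ^ (m:ℕ) = 1 := by
      rw [← Real.rpow_natCast (u k) m, ← Real.rpow_add (hu k)]
      simp
    have hreal : u k ^ (-(m:ℝ)) * ((2*b)^σ * (c*u k)^m) = (2*b)^σ * c^m := by
      have hcu : (c * u k)^m = c^m * u k^m := mul_pow c (u k) m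
      calc u k ^ (-(m:ℝ)) * ((2*b)^σ * (c*u k)^m)
          = (2*b)^σ * c^m * (u k ^ (-(m:ℝ)) * u k ^ m) := by rw [hcu]; ring
        _ = (2*b)^σ * c^m := by rw [hpow, mul_one]
    have h1 : ε = Kp ^ p * ENNReal.ofReal (u k ^ (-(m:ℝ))) * volume (Box k) := by
      rw [hBoxVol k, hεdef, mul_assoc, ← ENNReal.ofReal_mul (by positivity),
        ← ENNReal.ofReal_mul (Real.rpow_nonneg (hu k).le _), hreal]
    calc ε = Kp ^ p * ENNReal.ofReal (u k ^ (-(m:ℝ))) * volume (Box k) := h1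
      _ = ∫⁻ _x in Box k, (Kp ^ p * ENNReal.ofReal (u k ^ (-(m:ℝ)))) :=
          (setLIntegral_const _ _).symm
      _ ≤ ∫⁻ x in Box k,
            (cappedFracMaximal 2 ((μH[(σ : ℝ)]).restrict (Eset n σ ∩ ball 0 1)) σ α x) ^ p :=
          setLIntegral_mono' (hBoxMeas k) (fun x hx => hPoint k x hx)
  -- disjointness
  have hdisj : Pairwise (Function.onFun Disjoint Box) := by
    have key : ∀ k l : ℕ, k < l → ∀ x : Euc n, x ∈ Box k → x ∈ Box l → False := by
      intro k l hkl x hxk hxl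
      have hnlt : ¬((((⟨σ, hσn'⟩ : Fin n)) : ℕ) < σ) := by
        show ¬(σ < σ); exact lt_irrefl σ
      have h1 := (hmemBox k x).1 hxk ⟨σ, hσn'⟩
      have h2 := (hmemBox l x).1 hxl ⟨σ, hσn'⟩
      simp only [hIdef] at h1 h2
      rw [if_neg hnlt] at h1 h2
      have hmon := humono k l hkl
      have h3 : 2 * (c * u l) ≤ c * u k := by nlinarith [hu k, hu l, hc]
      linarith [h1.1, h2.2]
    intro k l hkl
    rcases lt_or_gt_of_ne hkl with h | h
    · exact Set.disjoint_left.2 fun x hxk hxl => key k l h x hxk hxl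
    · exact Set.disjoint_left.2 fun x hxl hxk => key l k h x hxk hxl
  have hsubball : (⋃ k, Box k) ⊆ ball (0 : Euc n) 1 := by
    refine iUnion_subset fun k x hx => ?_
    rw [mem_ball_zero_iff]
    have := (hBoxProp k x hx).1
    linarith
  refine top_le_iff.1 ?_
  calc (⊤:ℝ≥0∞) = ∑' _k : ℕ, ε := (ENNReal.tsum_const_eq_top_of_ne_zero hε0).symm
    _ ≤ ∑' k : ℕ, ∫⁻ x in Box k,
          (cappedFracMaximal 2 ((μH[(σ : ℝ)]).restrict (Eset n σ ∩ ball 0 1)) σ α x) ^ p :=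
        ENNReal.tsum_le_tsum hterm
    _ = ∫⁻ x in ⋃ k, Box k,
          (cappedFracMaximal 2 ((μH[(σ : ℝ)]).restrict (Eset n σ ∩ ball 0 1)) σ α x) ^ p :=
        (lintegral_iUnion hBoxMeas hdisj _).symm
    _ ≤ ∫⁻ x in ball (0 : Euc n) 1,
          (cappedFracMaximal 2 ((μH[(σ : ℝ)]).restrict (Eset n σ ∩ ball 0 1)) σ α x) ^ p :=
        lintegral_mono_set hsubball
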